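/- For every real q < 3, ∫_{−ln 2}^{∞} (e^{(q−2)y} − 1 − (q − 2)(e^y − 1)·1_{y < ln 2})·e^{y}/(e^y − 1)² dy = ∫_{−ln 2}^{∞} (e^{qy} − 1 − q(e^y − 1)·1_{y < ln 2})·e^{−y}/(e^y − 1)² dy + 2 + 2·ln 2 − q·(2·ln 2 + 3/2). -/

import Mathlib

open MeasureTheory
open Set Real Filter


private lemma log_abs_le' {s : ℝ} (hs : s ∈ Icc (1/2:ℝ) 2) : |Real.log s| ≤ Real.log 2 := by
  obtain ⟨h1, h2⟩ := hs
  rw [abs_le]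
  constructor
  · rw [neg_le, ← Real.log_inv]
    apply Real.log_le_log (by positivity)
    rw [inv_le_comm₀ (by linarith) (by norm_num)]
    linarith
  · exact Real.log_le_log (by linarith) h2

private lemma pow_bound' (p : ℝ) {s : ℝ} (hs : s ∈ Icc (1/2:ℝ) 2) :
    s ^ p ≤ Real.exp (|p| * Real.log 2) := by
  rw [Real.rpow_def_of_pos (by linarith [hs.1] : (0:ℝ) < s)]
  apply Real.exp_le_exp.2
  calc Real.log s * p ≤ |Real.log s * p| := le_abs_self _
    _ = |p| * |Real.log s| := by rw [abs_mul, mul_comm]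
    _ ≤ |p| * Real.log 2 := mul_le_mul_of_nonneg_left (log_abs_le' hs) (abs_nonneg _)

private lemma taylor_bound' (r : ℝ) : ∃ K : ℝ, 0 ≤ K ∧ ∀ t ∈ Icc (1/2:ℝ) 2,
    |t ^ r - 1 - r * (t - 1)| ≤ K * (t - 1)^2 := by
  set M := Real.exp (|r - 2| * Real.log 2) with hM
  refine ⟨|r| * |r - 1| * M, by positivity, fun t ht => ?_⟩
  have hIcc : ∀ s ∈ Icc (1/2:ℝ) 2, (0:ℝ) < s := fun s hs => by linarith [hs.1]
  have h1 : ∀ s ∈ Icc (1/2:ℝ) 2, |r * s ^ (r-1) - r| ≤ (|r| * |r - 1| * M) * |s - 1| := by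
    intro s hs
    have := Convex.norm_image_sub_le_of_norm_hasDerivWithin_le
      (f := fun u => r * u ^ (r-1)) (f' := fun u => r * ((r-1) * u ^ (r-1-1)))
      (s := Icc (1/2:ℝ) 2) (C := |r| * |r - 1| * M)
      (fun u hu => ((Real.hasDerivAt_rpow_const (Or.inl (ne_of_gt (hIcc u hu)))).const_mul r).hasDerivWithinAt)
      (fun u hu => by
        have hb := pow_bound' (r-1-1) hu
        have hpos : (0:ℝ) ≤ u ^ (r-1-1) := Real.rpow_nonneg (le_of_lt (hIcc u hu)) _
        rw [Real.norm_eq_abs, abs_mul, abs_mul, abs_of_nonneg hpos]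
        have heq : |r - 1 - 1| = |r - 2| := by ring_nf
        rw [heq] at hb
        have h2' : |r - 1| * u ^ (r - 1 - 1) ≤ |r - 1| * M :=
          mul_le_mul_of_nonneg_left hb (abs_nonneg _)
        calc |r| * (|r - 1| * u ^ (r-1-1)) ≤ |r| * (|r - 1| * M) :=
              mul_le_mul_of_nonneg_left h2' (abs_nonneg _)
          _ = |r| * |r - 1| * M := by ring)
      (convex_Icc _ _) (by norm_num : (1:ℝ) ∈ Icc (1/2:ℝ) 2) hs
    simpa [Real.norm_eq_abs, Real.one_rpow, abs_sub_comm] using this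
  have hseg : Set.uIcc (1:ℝ) t ⊆ Icc (1/2:ℝ) 2 := by
    rw [Set.uIcc_eq_union]
    rintro s (hs | hs)
    · exact ⟨by linarith [hs.1], by linarith [hs.2, ht.2]⟩
    · exact ⟨by linarith [hs.1, ht.1], by linarith [hs.2]⟩
  have h2 := Convex.norm_image_sub_le_of_norm_hasDerivWithin_le
      (f := fun u => u ^ r - r * u) (f' := fun u => r * u ^ (r-1) - r)
      (s := Set.uIcc (1:ℝ) t) (C := (|r| * |r - 1| * M) * |t - 1|)
      (fun u hu => (((Real.hasDerivAt_rpow_const (Or.inl (ne_of_gt (hIcc u (hseg hu))))).sub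
        ((hasDerivAt_id u).const_mul r)).congr_deriv (by ring)).hasDerivWithinAt)
      (fun u hu => by
        rw [Real.norm_eq_abs]
        refine (h1 u (hseg hu)).trans ?_
        apply mul_le_mul_of_nonneg_left _ (by positivity)
        rcases le_total (1:ℝ) t with h | h
        · rw [Set.uIcc_of_le h] at hu
          rw [abs_of_nonneg (by linarith [hu.1]), abs_of_nonneg (by linarith)]
          linarith [hu.2]
        · rw [Set.uIcc_of_ge h] at hu
          rw [abs_of_nonpos (by linarith [hu.2]), abs_of_nonpos (by linarith)]
          linarith [hu.1])
      (convex_uIcc _ _) Set.left_mem_uIcc Set.right_mem_uIcc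
  simp only [Real.norm_eq_abs, Real.one_rpow] at h2
  have heq : t ^ r - 1 - r * (t - 1) = (t ^ r - r * t) - (1 - r * 1) := by ring
  rw [heq]
  calc |(t ^ r - r * t) - (1 - r * 1)| ≤ (|r| * |r - 1| * M) * |t - 1| * |t - 1| := h2
    _ = (|r| * |r - 1| * M) * (t - 1)^2 := by rw [mul_assoc, ← abs_mul, ← sq, sq_abs]

/-- Taylor bound in exponential form. -/
private lemma middle_bound (r : ℝ) : ∃ K : ℝ, 0 ≤ K ∧
    ∀ y ∈ Icc (-Real.log 2) (Real.log 2),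
      |Real.exp (r * y) - 1 - r * (Real.exp y - 1)| ≤ K * (Real.exp y - 1)^2 := by
  obtain ⟨K, hK0, hK⟩ := taylor_bound' r
  refine ⟨K, hK0, fun y hy => ?_⟩
  have ht : Real.exp y ∈ Icc (1/2:ℝ) 2 := by
    constructor
    · have := Real.exp_le_exp.2 hy.1
      rwa [Real.exp_neg, Real.exp_log (by norm_num : (0:ℝ) < 2), ← one_div] at this
    · have := Real.exp_le_exp.2 hy.2
      rwa [Real.exp_log (by norm_num : (0:ℝ) < 2)] at this
  have hrw : Real.exp y ^ r = Real.exp (r * y) := by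
    rw [Real.rpow_def_of_pos (Real.exp_pos y), Real.log_exp, mul_comm]
  have := hK (Real.exp y) ht
  rwa [hrw] at this

set_option maxHeartbeats 1000000 in
theorem stmt_11 (q : ℝ) (hq : q < 3) :
    (∫ y in Set.Ioi (-Real.log 2),
        (Real.exp ((q - 2) * y) - 1
            - (q - 2) * (Real.exp y - 1) * (if y < Real.log 2 then (1 : ℝ) else 0))
          * Real.exp y / (Real.exp y - 1) ^ 2)
      = (∫ y in Set.Ioi (-Real.log 2),
          (Real.exp (q * y) - 1
              - q * (Real.exp y - 1) * (if y < Real.log 2 then (1 : ℝ) else 0))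
            * Real.exp (-y) / (Real.exp y - 1) ^ 2)
        + 2 + 2 * Real.log 2 - q * (2 * Real.log 2 + 3/2) := by
  have hl2 : (0:ℝ) < Real.log 2 := Real.log_pos (by norm_num)
  have hel2 : Real.exp (Real.log 2) = 2 := Real.exp_log (by norm_num)
  set a : ℝ := -Real.log 2 with ha
  set f1 : ℝ → ℝ := fun y =>
    (Real.exp ((q - 2) * y) - 1
        - (q - 2) * (Real.exp y - 1) * (if y < Real.log 2 then (1 : ℝ) else 0))
      * Real.exp y / (Real.exp y - 1) ^ 2 with hf1
  set f2 : ℝ → ℝ := fun y =>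
    (Real.exp (q * y) - 1
        - q * (Real.exp y - 1) * (if y < Real.log 2 then (1 : ℝ) else 0))
      * Real.exp (-y) / (Real.exp y - 1) ^ 2 with hf2
  set g : ℝ → ℝ := fun y =>
    if y < Real.log 2 then (2 - q) - (q - 1) * Real.exp (-y)
    else Real.exp (-y) - 2 / (Real.exp y - 1) with hg
  -- measurability
  have hmg : Measurable g := by
    apply Measurable.ite (measurableSet_lt measurable_id measurable_const)
    · exact (measurable_const.sub ((measurable_id.neg.exp).const_mul (q-1)))
    · exact (measurable_id.neg.exp).sub (measurable_const.div ((measurable_id.exp).sub measurable_const))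
  have hmf2 : Measurable f2 := by
    apply Measurable.div
    · apply Measurable.mul _ measurable_id.neg.exp
      apply Measurable.sub (Measurable.sub _ measurable_const)
      · exact ((measurable_id.exp.sub measurable_const).const_mul q).mul
          (Measurable.ite (measurableSet_lt measurable_id measurable_const)
            measurable_const measurable_const)
      · exact ((measurable_const.mul measurable_id)).exp
    · exact ((measurable_id.exp).sub measurable_const).pow measurable_const
  -- pointwise key identity
  have key : ∀ y : ℝ, y ≠ 0 → f1 y = f2 y + g y := by
    intro y hy
    have hE : Real.exp y ≠ 0 := (Real.exp_pos y).ne'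
    have hE1 : Real.exp y - 1 ≠ 0 :=
      sub_ne_zero.2 (fun h => hy (by rwa [Real.exp_eq_one_iff] at h))
    have h2 : Real.exp ((q-2)*y) = Real.exp (q*y) * (Real.exp y)⁻¹ * (Real.exp y)⁻¹ := by
      rw [← Real.exp_neg, ← Real.exp_add, ← Real.exp_add]; ring_nf
    have h3 : Real.exp (-y) = (Real.exp y)⁻¹ := Real.exp_neg y
    by_cases hlt : y < Real.log 2
    · simp only [hf1, hf2, hg, if_pos hlt, mul_one]
      rw [h2, h3]; field_simp; ring
    · simp only [hf1, hf2, hg, if_neg hlt, mul_zero, sub_zero]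
      rw [h2, h3]; field_simp; ring
  -- tail bound helper : for log 2 ≤ y
  have tail_div : ∀ y : ℝ, Real.log 2 ≤ y →
      Real.exp (-y) / (Real.exp y - 1)^2 ≤ 4 * Real.exp (-3*y) := by
    intro y hy
    have hE2 : (2:ℝ) ≤ Real.exp y := by
      calc (2:ℝ) = Real.exp (Real.log 2) := hel2.symm
        _ ≤ Real.exp y := Real.exp_le_exp.2 hy
    have hpos : (0:ℝ) < (Real.exp y - 1)^2 := by nlinarith
    rw [div_le_iff₀ hpos]
    have hrw : Real.exp (-y) = Real.exp (-3*y) * Real.exp y * Real.exp y := by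
      rw [← Real.exp_add, ← Real.exp_add]; ring_nf
    rw [hrw]
    have h3p : (0:ℝ) < Real.exp (-3*y) := Real.exp_pos _
    have hfac : (0:ℝ) ≤ (Real.exp y - 2) * (3*Real.exp y - 2) :=
      mul_nonneg (by linarith) (by linarith)
    nlinarith [mul_nonneg h3p.le hfac]
  -- integrability of f2
  have hintf2 : IntegrableOn f2 (Set.Ioi a) := by
    rw [← Set.Ioo_union_Ici_eq_Ioi (show a < Real.log 2 by rw [ha]; linarith)]
    apply IntegrableOn.union
    · -- middle
      obtain ⟨K, hK0, hK⟩ := middle_bound q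
      apply Integrable.mono' (g := fun _ => 2 * K)
        (integrableOn_const measure_Ioo_lt_top.ne)
        (hmf2.aestronglyMeasurable)
      refine (ae_restrict_iff' measurableSet_Ioo).2 (ae_of_all _ fun y hy => ?_)
      by_cases hy0 : y = 0
      · subst hy0; simp [hf2]; positivity
      have hE1 : Real.exp y - 1 ≠ 0 :=
        sub_ne_zero.2 (fun h => hy0 (by rwa [Real.exp_eq_one_iff] at h))
      have hsq : (0:ℝ) < (Real.exp y - 1)^2 := by positivity
      have hlt : y < Real.log 2 := hy.2
      have hyI : y ∈ Icc (-Real.log 2) (Real.log 2) := ⟨le_of_lt hy.1, le_of_lt hy.2⟩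
      have hNb := hK y hyI
      have hel : Real.exp (-y) ≤ 2 := by
        calc Real.exp (-y) ≤ Real.exp (Real.log 2) := Real.exp_le_exp.2 (by linarith [hy.1])
          _ = 2 := hel2
      have : ‖f2 y‖ = |Real.exp (q*y) - 1 - q * (Real.exp y - 1)| * Real.exp (-y) / (Real.exp y - 1)^2 := by
        simp only [hf2, if_pos hlt, mul_one, Real.norm_eq_abs]
        rw [abs_div, abs_mul, abs_of_pos (Real.exp_pos _), abs_of_pos hsq]
      rw [this]
      calc |Real.exp (q*y) - 1 - q * (Real.exp y - 1)| * Real.exp (-y) / (Real.exp y - 1)^2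
          ≤ (K * (Real.exp y - 1)^2) * Real.exp (-y) / (Real.exp y - 1)^2 := by
            gcongr
        _ = K * Real.exp (-y) := by field_simp
        _ ≤ 2 * K := by nlinarith
    · -- tail
      rw [integrableOn_Ici_iff_integrableOn_Ioi]
      apply Integrable.mono'
        (g := fun y => 4 * Real.exp (-(3-q)*y) + 8 * Real.exp (-3*y))
        (((exp_neg_integrableOn_Ioi _ (by linarith : (0:ℝ) < 3-q)).const_mul 4).add
          ((exp_neg_integrableOn_Ioi _ (by norm_num : (0:ℝ) < 3)).const_mul 8))
        (hmf2.aestronglyMeasurable)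
      refine (ae_restrict_iff' measurableSet_Ioi).2 (ae_of_all _ fun y hy => ?_)
      have hyl : Real.log 2 ≤ y := le_of_lt hy
      have hnlt : ¬ (y < Real.log 2) := not_lt.2 hyl
      have hdiv := tail_div y hyl
      have hsq : (0:ℝ) < (Real.exp y - 1)^2 := by
        have : (2:ℝ) ≤ Real.exp y := by
          calc (2:ℝ) = Real.exp (Real.log 2) := hel2.symm
            _ ≤ Real.exp y := Real.exp_le_exp.2 hyl
        nlinarith
      have hN : |Real.exp (q*y) - 1| ≤ Real.exp (q*y) + 1 := by
        have := Real.exp_pos (q*y); rw [abs_le]; constructor <;> nlinarith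
      have hdnn : (0:ℝ) ≤ Real.exp (-y) / (Real.exp y - 1)^2 :=
        le_of_lt (div_pos (Real.exp_pos _) hsq)
      have hfeq : ‖f2 y‖ = |Real.exp (q*y) - 1| * (Real.exp (-y) / (Real.exp y - 1)^2) := by
        simp only [hf2, if_neg hnlt, mul_zero, sub_zero, Real.norm_eq_abs]
        rw [mul_div_assoc, abs_mul, abs_of_nonneg hdnn]
      rw [hfeq]
      have hstep : |Real.exp (q*y) - 1| * (Real.exp (-y) / (Real.exp y - 1)^2)
          ≤ (Real.exp (q*y) + 1) * (4 * Real.exp (-3*y)) :=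
        mul_le_mul hN hdiv hdnn (by positivity)
      refine hstep.trans ?_
      have heq2 : (Real.exp (q*y) + 1) * (4 * Real.exp (-3*y))
          = 4 * (Real.exp (q*y) * Real.exp (-3*y)) + 4 * Real.exp (-3*y) := by ring
      rw [heq2, ← Real.exp_add]
      have heq3 : q*y + -3*y = -(3-q)*y := by ring
      rw [heq3]
      have := Real.exp_pos (-3*y)
      linarith
  -- integrability of g
  have hintg_mid : IntegrableOn g (Set.Ioo a (Real.log 2)) := by
    apply Integrable.mono' (g := fun _ => |2 - q| + |q - 1| * 2)
      (integrableOn_const measure_Ioo_lt_top.ne)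
      (hmg.aestronglyMeasurable)
    refine (ae_restrict_iff' measurableSet_Ioo).2 (ae_of_all _ fun y hy => ?_)
    have hel : Real.exp (-y) ≤ 2 := by
      calc Real.exp (-y) ≤ Real.exp (Real.log 2) := Real.exp_le_exp.2 (by linarith [hy.1])
        _ = 2 := hel2
    simp only [hg, if_pos hy.2, Real.norm_eq_abs]
    calc |(2 - q) - (q - 1) * Real.exp (-y)| ≤ |2 - q| + |(q-1) * Real.exp (-y)| := abs_sub _ _
      _ ≤ |2 - q| + |q - 1| * 2 := by
          rw [abs_mul, abs_of_pos (Real.exp_pos _)]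
          have : |q - 1| * Real.exp (-y) ≤ |q - 1| * 2 :=
            mul_le_mul_of_nonneg_left hel (abs_nonneg _)
          linarith
  have hintg_tail : IntegrableOn (fun y => Real.exp (-y) - 2 / (Real.exp y - 1)) (Set.Ioi (Real.log 2)) := by
    apply Integrable.mono' (g := fun y => 5 * Real.exp (-1*y))
      ((exp_neg_integrableOn_Ioi _ (by norm_num : (0:ℝ) < 1)).const_mul 5)
      (((measurable_id.neg.exp).sub
        (measurable_const.div ((measurable_id.exp).sub measurable_const))).aestronglyMeasurable)
    refine (ae_restrict_iff' measurableSet_Ioi).2 (ae_of_all _ fun y hy => ?_)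
    have hyl : Real.log 2 ≤ y := le_of_lt hy
    have hE2 : (2:ℝ) ≤ Real.exp y := by
      calc (2:ℝ) = Real.exp (Real.log 2) := hel2.symm
        _ ≤ Real.exp y := Real.exp_le_exp.2 hyl
    have h1 : (0:ℝ) < Real.exp y - 1 := by linarith
    have hE : (0:ℝ) < Real.exp y := Real.exp_pos y
    have h2 : 2 / (Real.exp y - 1) ≤ 4 * Real.exp (-y) := by
      have h4 : 4 * Real.exp (-y) = 4 / Real.exp y := by
        rw [Real.exp_neg]; ring
      rw [h4, div_le_div_iff₀ h1 hE]
      linarith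
    have h2' : (0:ℝ) < 2 / (Real.exp y - 1) := by positivity
    have hep : (0:ℝ) < Real.exp (-y) := Real.exp_pos _
    simp only [id_eq, Real.norm_eq_abs, neg_one_mul, Pi.sub_apply, Pi.div_apply, Pi.neg_apply]
    rw [abs_le]
    constructor <;> linarith
  have hintg : IntegrableOn g (Set.Ioi a) := by
    rw [← Set.Ioo_union_Ici_eq_Ioi (show a < Real.log 2 by rw [ha]; linarith)]
    apply IntegrableOn.union hintg_mid
    rw [integrableOn_Ici_iff_integrableOn_Ioi]
    apply hintg_tail.congr_fun _ measurableSet_Ioi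
    intro y hy
    simp only [hg, if_neg (not_lt.2 (le_of_lt (Set.mem_Ioi.mp hy)))]
  -- a.e. identity
  have hne : ∀ᵐ (y : ℝ), y ≠ (0:ℝ) := by
    rw [ae_iff]
    simp only [not_not, Set.setOf_eq_eq_singleton]
    exact Real.volume_singleton
  have hae : f1 =ᵐ[volume.restrict (Set.Ioi a)] fun y => f2 y + g y := by
    filter_upwards [ae_restrict_of_ae hne] with y hy
    exact key y hy
  -- value of middle g integral
  have hmidval : ∫ y in Set.Ioo a (Real.log 2), g y
      = (2-q) * (2 * Real.log 2) + (q-1) * (1/2 - 2) := by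
    rw [setIntegral_congr_fun measurableSet_Ioo
      (show Set.EqOn g (fun y => (2-q) - (q-1) * Real.exp (-y)) (Set.Ioo a (Real.log 2)) from
        fun y hy => by simp only [hg, if_pos hy.2])]
    rw [← integral_Ioc_eq_integral_Ioo,
      ← intervalIntegral.integral_of_le (show a ≤ Real.log 2 by rw [ha]; linarith)]
    have hF : ∀ y ∈ Set.uIcc a (Real.log 2),
        HasDerivAt (fun y => (2-q)*y + (q-1)*Real.exp (-y)) ((2-q) - (q-1)*Real.exp (-y)) y := by
      intro y _
      have hexp : HasDerivAt (fun y : ℝ => Real.exp (-y)) (-Real.exp (-y)) y := by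
        simpa using (hasDerivAt_neg y).exp
      have := ((hasDerivAt_id y).const_mul (2-q)).add (hexp.const_mul (q-1))
      refine this.congr_deriv ?_
      ring
    rw [intervalIntegral.integral_eq_sub_of_hasDerivAt hF
      (Continuous.intervalIntegrable
        (continuous_const.sub (continuous_const.mul (Real.continuous_exp.comp continuous_neg))) _ _)]
    rw [ha]
    simp only [neg_neg, Real.exp_neg, hel2]
    norm_num
    ring_nf
  -- value of tail g integral
  have htailval : ∫ y in Set.Ioi (Real.log 2), (Real.exp (-y) - 2 / (Real.exp y - 1))
      = 1/2 - 2 * Real.log 2 := by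
    have hderiv : ∀ y ∈ Set.Ici (Real.log 2),
        HasDerivAt (fun y => -Real.exp (-y) - 2 * Real.log (1 - Real.exp (-y)))
          (Real.exp (-y) - 2 / (Real.exp y - 1)) y := by
      intro y hy
      have hE2 : (2:ℝ) ≤ Real.exp y := by
        calc (2:ℝ) = Real.exp (Real.log 2) := hel2.symm
          _ ≤ Real.exp y := Real.exp_le_exp.2 hy
      have hE : (0:ℝ) < Real.exp y := Real.exp_pos y
      have hinner_pos : (0:ℝ) < 1 - Real.exp (-y) := by
        rw [Real.exp_neg]
        have : (Real.exp y)⁻¹ ≤ 2⁻¹ := by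
          apply inv_anti₀ (by norm_num) hE2
        norm_num at this ⊢
        linarith
      have hexp : HasDerivAt (fun y : ℝ => Real.exp (-y)) (-Real.exp (-y)) y := by
        simpa using (hasDerivAt_neg y).exp
      have hinner : HasDerivAt (fun y : ℝ => 1 - Real.exp (-y)) (Real.exp (-y)) y := by
        simpa using (hexp.const_sub 1)
      have hlog : HasDerivAt (fun y : ℝ => Real.log (1 - Real.exp (-y)))
          ((1 - Real.exp (-y))⁻¹ * Real.exp (-y)) y := by
        have := (Real.hasDerivAt_log (ne_of_gt hinner_pos)).comp y hinner
        simpa [Function.comp_def] using this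
      have htot := (hexp.neg).sub (hlog.const_mul 2)
      refine htot.congr_deriv ?_
      rw [Real.exp_neg]
      have hE1 : Real.exp y - 1 ≠ 0 := by linarith
      field_simp
    have htendsto : Tendsto (fun y => -Real.exp (-y) - 2 * Real.log (1 - Real.exp (-y)))
        atTop (nhds 0) := by
      have h1 : Tendsto (fun y : ℝ => Real.exp (-y)) atTop (nhds 0) := by
        simpa using Real.tendsto_exp_neg_atTop_nhds_zero
      have h2 : Tendsto (fun y : ℝ => 1 - Real.exp (-y)) atTop (nhds 1) := by
        simpa using tendsto_const_nhds.sub h1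
      have h3 : Tendsto (fun y : ℝ => Real.log (1 - Real.exp (-y))) atTop (nhds 0) := by
        have := (Real.continuousAt_log (by norm_num : (1:ℝ) ≠ 0)).tendsto.comp h2
        simpa [Function.comp_def, Real.log_one] using this
      have := (h1.neg).sub (h3.const_mul 2)
      simpa using this
    have := integral_Ioi_of_hasDerivAt_of_tendsto' hderiv hintg_tail htendsto
    rw [this]
    rw [Real.exp_neg, hel2]
    have : (1:ℝ) - 2⁻¹ = 2⁻¹ := by norm_num
    rw [this, Real.log_inv]
    ring
  -- total g integral
  have hgval : ∫ y in Set.Ioi a, g y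
      = 2 + 2 * Real.log 2 - q * (2 * Real.log 2 + 3/2) := by
    rw [← Set.Ioo_union_Ici_eq_Ioi (show a < Real.log 2 by rw [ha]; linarith)]
    have hdisj : Disjoint (Set.Ioo a (Real.log 2)) (Set.Ici (Real.log 2)) := by
      rw [Set.disjoint_left]; rintro x ⟨_, h2⟩ h3; exact absurd h3 (not_le.2 h2)
    rw [setIntegral_union hdisj measurableSet_Ici hintg_mid
      (by
        rw [integrableOn_Ici_iff_integrableOn_Ioi]
        apply hintg_tail.congr_fun _ measurableSet_Ioi
        intro y hy
        simp only [hg, if_neg (not_lt.2 (le_of_lt (Set.mem_Ioi.mp hy)))])]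
    rw [hmidval, integral_Ici_eq_integral_Ioi]
    rw [setIntegral_congr_fun measurableSet_Ioi
      (show Set.EqOn g (fun y => Real.exp (-y) - 2/(Real.exp y - 1)) (Set.Ioi (Real.log 2)) from
        fun y hy => by simp only [hg, if_neg (not_lt.2 (le_of_lt (Set.mem_Ioi.mp hy)))])]
    rw [htailval]
    ring
  -- conclude
  calc ∫ y in Set.Ioi a, f1 y = ∫ y in Set.Ioi a, (f2 y + g y) := integral_congr_ae hae
    _ = (∫ y in Set.Ioi a, f2 y) + ∫ y in Set.Ioi a, g y := integral_add hintf2 hintg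
    _ = (∫ y in Set.Ioi a, f2 y) + 2 + 2 * Real.log 2 - q * (2 * Real.log 2 + 3/2) := by
        rw [hgval]; ring
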